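/- There is an assignment of p items of sizes s₁, ..., s_p into k bins such that the total size in each bin is exactly m, if and only if in the instance of Unsplittable Flow on K_{2,k} — where each edge (from s or t to a middle vertex) has capacity m, and for each item i there is a task from s to t with demand sᵢ and profit 1 — all p tasks can be simultaneously routed along s–t paths respecting all edge capacities, i.e., a profit of p is achievable. -/

import Mathlib

open SimpleGraph Finset

/-- In a path, the only edge incident to the start vertex is the first edge. -/
lemma first_edge_unique {V : Type*} {G : SimpleGraph V} {x b y z : V}
    (h : G.Adj x b) (q : G.Walk b y) (hp : (SimpleGraph.Walk.cons h q).IsPath) :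
    s(x, z) ∈ (SimpleGraph.Walk.cons h q).edges ↔ z = b := by
  rw [SimpleGraph.Walk.edges_cons, List.mem_cons]
  constructor
  · rintro (he | he)
    · rw [Sym2.eq_iff] at he
      rcases he with ⟨-, rfl⟩ | ⟨rfl, rfl⟩
      · rfl
      · exact absurd h G.irrefl
    · exact absurd (q.fst_mem_support_of_mem_edges he)
        ((SimpleGraph.Walk.cons_isPath_iff h q).mp hp).2
  · rintro rfl; exact Or.inl rfl

/-- Correctness of the reduction from exact-fill Unary Bin Packing to Unsplittable Flow on
`K_{2,k}`: with `∑ᵢ sᵢ = k·m`, the `p` items of sizes `sᵢ` can be assigned to `k` bins each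
filled to exactly `m` iff all `p` tasks (each from `s` to `t` with demand `sᵢ`) can be
simultaneously routed along `s`–`t` paths in `K_{2,k}` where every edge has capacity `m`. -/
theorem stmt_12 (k p m : ℕ) (hk : 1 ≤ k) (sz : Fin p → ℕ)
    (hsum : ∑ i, sz i = k * m) :
    (∃ f : Fin p → Fin k,
        ∀ j : Fin k, ∑ i ∈ Finset.univ.filter (fun i => f i = j), sz i = m) ↔
      (∃ route : Fin p →
          (completeBipartiteGraph (Fin 2) (Fin k)).Walk (Sum.inl 0) (Sum.inl 1),
        (∀ i, (route i).IsPath) ∧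
          ∀ e ∈ (completeBipartiteGraph (Fin 2) (Fin k)).edgeSet,
            ∑ i ∈ Finset.univ.filter (fun i => e ∈ (route i).edges), sz i ≤ m) := by
  constructor
  · rintro ⟨f, hf⟩
    have hadj1 : ∀ j : Fin k,
        (completeBipartiteGraph (Fin 2) (Fin k)).Adj (Sum.inl 0) (Sum.inr j) := by
      intro j; simp
    have hadj2 : ∀ j : Fin k,
        (completeBipartiteGraph (Fin 2) (Fin k)).Adj (Sum.inr j) (Sum.inl 1) := by
      intro j; simp
    refine ⟨fun i => SimpleGraph.Walk.cons (hadj1 (f i))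
      (SimpleGraph.Walk.cons (hadj2 (f i)) SimpleGraph.Walk.nil), ?_, ?_⟩
    · intro i
      rw [SimpleGraph.Walk.isPath_def]
      simp [SimpleGraph.Walk.support_cons]
    · intro e he
      induction e using Sym2.ind with
      | _ u v =>
        rw [SimpleGraph.mem_edgeSet, completeBipartiteGraph_adj] at he
        simp only [Sum.isLeft_iff, Sum.isRight_iff] at he
        have key : ∀ i : Fin p,
            (s(u, v) ∈ (SimpleGraph.Walk.cons (hadj1 (f i))
              (SimpleGraph.Walk.cons (hadj2 (f i)) SimpleGraph.Walk.nil)).edges) →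
            (∃ j : Fin k, (u = Sum.inr j ∨ v = Sum.inr j) ∧ f i = j) := by
          intro i hi
          simp only [SimpleGraph.Walk.edges_cons, SimpleGraph.Walk.edges_nil,
            List.mem_cons, List.not_mem_nil, or_false, Sym2.eq_iff] at hi
          rcases hi with (⟨rfl, rfl⟩ | ⟨rfl, rfl⟩) | (⟨rfl, rfl⟩ | ⟨rfl, rfl⟩)
          · exact ⟨f i, Or.inr rfl, rfl⟩
          · exact ⟨f i, Or.inl rfl, rfl⟩
          · exact ⟨f i, Or.inl rfl, rfl⟩
          · exact ⟨f i, Or.inr rfl, rfl⟩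
        -- the middle vertex of e
        rcases he with ⟨hu, hv⟩ | ⟨hu, hv⟩
        · obtain ⟨j, rfl⟩ := hv
          calc ∑ i ∈ Finset.univ.filter (fun i => s(u, Sum.inr j) ∈ _), sz i
              ≤ ∑ i ∈ Finset.univ.filter (fun i => f i = j), sz i := by
                apply Finset.sum_le_sum_of_subset
                intro i hi
                simp only [Finset.mem_filter, Finset.mem_univ, true_and] at hi ⊢
                obtain ⟨j', hj', hfj'⟩ := key i hi
                rcases hj' with h1 | h1
                · rw [h1] at hu; simp at hu
                · rw [Sum.inr.injEq] at h1; rw [hfj', h1]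
            _ = m := hf j
        · obtain ⟨j, rfl⟩ := hu
          calc ∑ i ∈ Finset.univ.filter (fun i => s(Sum.inr j, v) ∈ _), sz i
              ≤ ∑ i ∈ Finset.univ.filter (fun i => f i = j), sz i := by
                apply Finset.sum_le_sum_of_subset
                intro i hi
                simp only [Finset.mem_filter, Finset.mem_univ, true_and] at hi ⊢
                obtain ⟨j', hj', hfj'⟩ := key i hi
                rcases hj' with h1 | h1
                · rw [Sum.inr.injEq] at h1; rw [hfj', h1]
                · rw [h1] at hv; simp at hv
            _ = m := hf j
  · rintro ⟨route, hpath, hcap⟩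
    -- the second vertex of each route is some inr j
    have hnn : ∀ i, ¬ (route i).Nil := by
      intro i hn
      have := hn.eq
      simp at this
    have hadj : ∀ i, (completeBipartiteGraph (Fin 2) (Fin k)).Adj (Sum.inl 0)
        ((route i).getVert 1) := fun i => (route i).adj_snd (hnn i)
    have hsnd : ∀ i, ∃ j : Fin k, (route i).getVert 1 = Sum.inr j := by
      intro i
      have := hadj i
      simp only [completeBipartiteGraph_adj] at this
      rcases this with ⟨-, hr⟩ | ⟨hl, -⟩
      · exact Sum.isRight_iff.mp hr
      · simp at hl
    choose f hf using hsnd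
    refine ⟨f, ?_⟩
    -- edge membership characterization
    have hmem : ∀ (i : Fin p) (j : Fin k),
        s(Sum.inl 0, Sum.inr j) ∈ (route i).edges ↔ f i = j := by
      intro i j
      have hdec := (route i).cons_tail_eq (hnn i)
      conv_lhs => rw [← hdec]
      have hp' : (SimpleGraph.Walk.cons ((route i).adj_snd (hnn i))
          (route i).tail).IsPath := by rw [hdec]; exact hpath i
      rw [first_edge_unique _ _ hp']
      constructor
      · intro h; have : (route i).snd = _ := hf i; rw [← h] at this
        exact (Sum.inr.injEq _ _).mp this.symm
      · rintro rfl; exact (hf i).symm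
    -- bound per bin
    have hle : ∀ j : Fin k, ∑ i ∈ Finset.univ.filter (fun i => f i = j), sz i ≤ m := by
      intro j
      have hedge : s(Sum.inl (0 : Fin 2), Sum.inr j) ∈
          (completeBipartiteGraph (Fin 2) (Fin k)).edgeSet := by simp
      have := hcap _ hedge
      calc ∑ i ∈ Finset.univ.filter (fun i => f i = j), sz i
          = ∑ i ∈ Finset.univ.filter
              (fun i => s(Sum.inl (0 : Fin 2), Sum.inr j) ∈ (route i).edges), sz i := by
            apply Finset.sum_congr _ (fun _ _ => rfl)
            ext i
            simp only [Finset.mem_filter, Finset.mem_univ, true_and]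
            exact (hmem i j).symm
        _ ≤ m := this
    -- equality from total sum
    have htot : ∑ j : Fin k, ∑ i ∈ Finset.univ.filter (fun i => f i = j), sz i
        = ∑ j : Fin k, m := by
      rw [Finset.sum_fiberwise Finset.univ f sz, hsum, Finset.sum_const,
        Finset.card_univ, Fintype.card_fin, smul_eq_mul]
    intro j
    exact (Finset.sum_eq_sum_iff_of_le (fun j _ => hle j)).mp htot j (Finset.mem_univ j)
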